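/- If a trace satisfies the every_request_gets_a_response invariant aux lt fds, then every file descriptor in fds is eventually written to in lt: for all fd ∈ fds, there exists an EWrite event on fd in lt. -/

import Mathlib

inductive Ev : Type
  | readOk (fd : ℕ)
  | readErr (fd : ℕ)
  | write (fd : ℕ)
  | other

def aux : List Ev → List ℕ → Prop
  | [], fds => fds = []
  | .readOk fd :: tl, fds => aux tl (fd :: fds)
  | .write fd :: tl, fds => aux tl (fds.filter (fun fd' => decide (fd ≠ fd')))
  | _ :: tl, fds => aux tl fds

/-- If the invariant holds starting from pending set `fds`, then every file
descriptor in `fds` is eventually written to in the trace. -/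
theorem aux_pending_written (lt : List Ev) (fds : List ℕ) (h : aux lt fds) :
    ∀ fd ∈ fds, Ev.write fd ∈ lt := by
  induction lt generalizing fds with
  | nil => simp [aux] at h; subst h; simp
  | cons e tl ih =>
    cases e with
    | readOk fd' =>
      intro fd hfd
      exact List.mem_cons_of_mem _ (ih _ h fd (List.mem_cons_of_mem _ hfd))
    | readErr fd' =>
      intro fd hfd
      exact List.mem_cons_of_mem _ (ih _ h fd hfd)
    | other =>
      intro fd hfd
      exact List.mem_cons_of_mem _ (ih _ h fd hfd)
    | write fd' =>
      intro fd hfd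
      by_cases hc : fd' = fd
      · subst hc; exact List.mem_cons_self
      · refine List.mem_cons_of_mem _ (ih _ h fd ?_)
        simp [List.mem_filter, hfd, hc]
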